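/- arXiv:2408.16824 — 2 statements merged into one kernel-verified Lean document; each statement's English description precedes it below -/
import Mathlib

section
/- Let $A$ be a Hermitian operator on a finite-dimensional Hilbert space $\mathcal{H}_s$ with $\|A\| \leq 1$, let $U = e^{i\arccos(A)}$, and let $U_A = (H \otimes I_s)\big(|0\rangle\langle 0| \otimes U + |1\rangle\langle 1| \otimes U^\dagger\big)(H \otimes I_s)$. Let $S' = Z \otimes I_s$ where $Z$ is the Pauli-Z gate on the ancilla. Then $S' U_A = U_A^\dagger S'$, and consequently $(\langle 0| \otimes I_s)\,(S' U_A)^2\,(|0\rangle \otimes I_s) = I_s$ and $(\langle 0| \otimes I_s)\, S' U_A \,(|0\rangle \otimes I_s) = A$. -/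
open Matrix Kronecker
open scoped Matrix.Norms.L2Operator

/-- Functional calculus for a Hermitian matrix: apply `f : ℝ → ℂ` to the eigenvalues in a
spectral decomposition `A = U diag(λ) U†`. -/
noncomputable def hermFC {ι : Type*} [Fintype ι] [DecidableEq ι] {A : Matrix ι ι ℂ}
    (hA : A.IsHermitian) (f : ℝ → ℂ) : Matrix ι ι ℂ :=
  (hA.eigenvectorUnitary : Matrix ι ι ℂ) *
    Matrix.diagonal (fun i => f (hA.eigenvalues i)) *
      star (hA.eigenvectorUnitary : Matrix ι ι ℂ)

/-- The Hadamard gate. -/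
noncomputable def Hgate : Matrix (Fin 2) (Fin 2) ℂ :=
  ((Real.sqrt 2 : ℝ) : ℂ)⁻¹ • !![1, 1; 1, -1]

/-- The Pauli-Z gate. -/
def Zgate : Matrix (Fin 2) (Fin 2) ℂ := !![1, 0; 0, -1]

section aux
variable {ι : Type*} [Fintype ι] [DecidableEq ι] {A : Matrix ι ι ℂ} (hA : A.IsHermitian)

lemma hermFC_mul (f g : ℝ → ℂ) :
    hermFC hA f * hermFC hA g = hermFC hA (fun x => f x * g x) := by
  have h : star (hA.eigenvectorUnitary : Matrix ι ι ℂ) *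
      (hA.eigenvectorUnitary : Matrix ι ι ℂ) = 1 :=
    Matrix.mem_unitaryGroup_iff'.mp hA.eigenvectorUnitary.2
  unfold hermFC
  simp only [Matrix.mul_assoc]
  rw [← Matrix.mul_assoc (star _) (hA.eigenvectorUnitary : Matrix ι ι ℂ), h, Matrix.one_mul,
    ← Matrix.mul_assoc (Matrix.diagonal _), Matrix.diagonal_mul_diagonal]

lemma hermFC_star (f : ℝ → ℂ) :
    star (hermFC hA f) = hermFC hA (fun x => star (f x)) := by
  unfold hermFC
  simp [Matrix.star_eq_conjTranspose, Matrix.conjTranspose_mul, Matrix.diagonal_conjTranspose,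
    Matrix.mul_assoc]
  rfl

lemma hermFC_add (f g : ℝ → ℂ) :
    hermFC hA f + hermFC hA g = hermFC hA (fun x => f x + g x) := by
  unfold hermFC
  rw [← Matrix.add_mul, ← Matrix.mul_add, Matrix.diagonal_add]

lemma hermFC_smul (c : ℂ) (f : ℝ → ℂ) :
    hermFC hA (fun x => c * f x) = c • hermFC hA f := by
  have hd : Matrix.diagonal (fun i => c * f (hA.eigenvalues i)) =
      c • Matrix.diagonal (fun i => f (hA.eigenvalues i)) := by
    rw [← Matrix.diagonal_smul]; rfl
  unfold hermFC
  rw [hd, mul_smul_comm, smul_mul_assoc]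

lemma hermFC_congr {f g : ℝ → ℂ} (h : ∀ i, f (hA.eigenvalues i) = g (hA.eigenvalues i)) :
    hermFC hA f = hermFC hA g := by
  unfold hermFC
  exact congrArg (fun D => (hA.eigenvectorUnitary : Matrix ι ι ℂ) * Matrix.diagonal D *
    star (hA.eigenvectorUnitary : Matrix ι ι ℂ)) (funext h)

lemma hermFC_one : hermFC hA (fun _ => 1) = 1 := by
  have h : (hA.eigenvectorUnitary : Matrix ι ι ℂ) *
      star (hA.eigenvectorUnitary : Matrix ι ι ℂ) = 1 :=
    Matrix.mem_unitaryGroup_iff.mp hA.eigenvectorUnitary.2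
  unfold hermFC
  simp

lemma hermFC_id : hermFC hA (fun x => (x : ℂ)) = A := by
  conv_rhs => rw [hA.spectral_theorem]
  rfl

lemma eig_mem (hnorm : ‖A‖ ≤ 1) (i : ι) :
    -1 ≤ hA.eigenvalues i ∧ hA.eigenvalues i ≤ 1 := by
  have h1 := A.l2_opNorm_mulVec (hA.eigenvectorBasis i)
  have h2 : ‖(hA.eigenvalues i) • hA.eigenvectorBasis i‖ ≤ ‖A‖ * ‖hA.eigenvectorBasis i‖ := by
    convert h1 using 2
    exact (congrArg (EuclideanSpace.equiv ι ℂ).symm (hA.mulVec_eigenvectorBasis i)).symm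
  rw [norm_smul, hA.eigenvectorBasis.orthonormal.1 i] at h2
  simp only [mul_one, Real.norm_eq_abs] at h2
  exact abs_le.mp (h2.trans hnorm)

lemma star_kron (M : Matrix (Fin 2) (Fin 2) ℂ) (N : Matrix ι ι ℂ) :
    star (M ⊗ₖ N) = star M ⊗ₖ star N := by
  ext ⟨i, s⟩ ⟨j, t⟩
  simp [Matrix.star_eq_conjTranspose, Matrix.conjTranspose_apply, Matrix.kroneckerMap_apply,
    star_mul']

lemma star_exp_I_mul (x : ℝ) :
    star (Complex.exp (Complex.I * (x : ℂ))) = Complex.exp (-(Complex.I * (x : ℂ))) := by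
  rw [← starRingEnd_apply, ← Complex.exp_conj]
  congr 1
  simp [_root_.map_mul, Complex.conj_ofReal]

lemma P0_eq : Matrix.single (0 : Fin 2) 0 (1 : ℂ) = !![1, 0; 0, 0] := by
  ext i j
  fin_cases i <;> fin_cases j <;> simp [Matrix.single]

lemma P1_eq : Matrix.single (1 : Fin 2) 1 (1 : ℂ) = !![0, 0; 0, 1] := by
  ext i j
  fin_cases i <;> fin_cases j <;> simp [Matrix.single]

lemma starM1 : star !![(1:ℂ), 1; -1, -1] = !![(1:ℂ), -1; 1, -1] := by
  ext i j
  fin_cases i <;> fin_cases j <;>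
    simp [Matrix.star_eq_conjTranspose, Matrix.conjTranspose_apply]

lemma starM2 : star !![(1:ℂ), -1; 1, -1] = !![(1:ℂ), 1; -1, -1] := by
  ext i j
  fin_cases i <;> fin_cases j <;>
    simp [Matrix.star_eq_conjTranspose, Matrix.conjTranspose_apply]

lemma starZ : star Zgate = Zgate := by
  ext i j
  fin_cases i <;> fin_cases j <;>
    simp [Zgate, Matrix.star_eq_conjTranspose, Matrix.conjTranspose_apply]

end aux

/-- Qubitization of LOVE-LCU: with `S' = Z ⊗ I`, we have `S' U_A = U_A† S'`, hence
`(⟨0| ⊗ I)(S' U_A)²(|0⟩ ⊗ I) = I` and `(⟨0| ⊗ I) S' U_A (|0⟩ ⊗ I) = A`. -/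
theorem love_lcu_qubitization {ι : Type*} [Fintype ι] [DecidableEq ι]
    (A : Matrix ι ι ℂ) (hA : A.IsHermitian) (hnorm : ‖A‖ ≤ 1)
    (U : Matrix ι ι ℂ)
    (hUdef : U = hermFC hA (fun x => Complex.exp (Complex.I * (Real.arccos x : ℂ))))
    (UA : Matrix (Fin 2 × ι) (Fin 2 × ι) ℂ)
    (hUA : UA = (Hgate ⊗ₖ (1 : Matrix ι ι ℂ)) *
        (Matrix.single (0 : Fin 2) 0 (1 : ℂ) ⊗ₖ U +
          Matrix.single (1 : Fin 2) 1 (1 : ℂ) ⊗ₖ star U) *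
        (Hgate ⊗ₖ (1 : Matrix ι ι ℂ)))
    (S' : Matrix (Fin 2 × ι) (Fin 2 × ι) ℂ)
    (hS' : S' = Zgate ⊗ₖ (1 : Matrix ι ι ℂ)) :
    S' * UA = star UA * S' ∧
    ((S' * UA) * (S' * UA)).submatrix
        (fun s : ι => ((0 : Fin 2), s)) (fun t : ι => ((0 : Fin 2), t)) = 1 ∧
    (S' * UA).submatrix (fun s : ι => ((0 : Fin 2), s)) (fun t : ι => ((0 : Fin 2), t)) = A := by
  -- unitarity of U
  have hU1 : U * star U = 1 := by
    rw [hUdef, hermFC_star, hermFC_mul]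
    rw [hermFC_congr hA (g := fun _ => 1) (fun i => by
      rw [star_exp_I_mul, ← Complex.exp_add, add_neg_cancel, Complex.exp_zero])]
    exact hermFC_one hA
  have hU2 : star U * U = 1 := by
    rw [hUdef, hermFC_star, hermFC_mul]
    rw [hermFC_congr hA (g := fun _ => 1) (fun i => by
      rw [star_exp_I_mul, ← Complex.exp_add, neg_add_cancel, Complex.exp_zero])]
    exact hermFC_one hA
  -- U + U† = 2 A
  have hsum : U + star U = (2 : ℂ) • A := by
    rw [hUdef, hermFC_star, hermFC_add]
    rw [hermFC_congr hA (g := fun x => (2 : ℂ) * (x : ℂ)) (fun i => by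
      obtain ⟨h1, h2⟩ := eig_mem hA hnorm i
      rw [star_exp_I_mul]
      have := Complex.two_cos (x := (Real.arccos (hA.eigenvalues i) : ℂ))
      rw [mul_comm Complex.I, ← neg_mul, ← this, ← Complex.ofReal_cos,
        Real.cos_arccos h1 h2])]
    rw [hermFC_smul, hermFC_id]
  -- the closed form of S' * U_A
  have hcc : (((Real.sqrt 2 : ℝ) : ℂ))⁻¹ * (((Real.sqrt 2 : ℝ) : ℂ))⁻¹ = (2 : ℂ)⁻¹ := by
    rw [← mul_inv, ← Complex.ofReal_mul, Real.mul_self_sqrt (by norm_num)]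
    norm_num
  have hW : S' * UA = (2 : ℂ)⁻¹ •
      (!![(1:ℂ), 1; -1, -1] ⊗ₖ U + !![(1:ℂ), -1; 1, -1] ⊗ₖ star U) := by
    rw [hS', hUA, P0_eq, P1_eq]
    show Zgate ⊗ₖ (1 : Matrix ι ι ℂ) *
        ((((Real.sqrt 2 : ℝ) : ℂ)⁻¹ • !![1, 1; 1, -1]) ⊗ₖ (1 : Matrix ι ι ℂ) * _ *
          ((((Real.sqrt 2 : ℝ) : ℂ)⁻¹ • !![1, 1; 1, -1]) ⊗ₖ (1 : Matrix ι ι ℂ))) = _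
    rw [Matrix.smul_kronecker]
    simp only [Matrix.smul_mul, Matrix.mul_smul, smul_smul, hcc]
    congr 1
    simp only [Matrix.mul_add, Matrix.add_mul, Matrix.mul_assoc,
      ← Matrix.mul_kronecker_mul, Matrix.one_mul, Matrix.mul_one]
    norm_num [Zgate, Matrix.mul_fin_two]
  have hstarS : star S' = S' := by
    rw [hS', star_kron, starZ, star_one]
  -- part 1
  have part1 : S' * UA = star UA * S' := by
    have hsW : star (S' * UA) = S' * UA := by
      rw [hW, star_smul, star_add, star_kron, star_kron, starM1, starM2, star_star]
      rw [show star ((2:ℂ)⁻¹) = (2:ℂ)⁻¹ by norm_num [Complex.star_def]]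
      rw [add_comm]
    calc S' * UA = star (S' * UA) := hsW.symm
      _ = star UA * star S' := by rw [StarMul.star_mul]
      _ = star UA * S' := by rw [hstarS]
  -- part 2
  have hWW : (S' * UA) * (S' * UA) = 1 := by
    have e1 : !![(1:ℂ), 1; -1, -1] * !![(1:ℂ), 1; -1, -1] = 0 := by
      ext i j; fin_cases i <;> fin_cases j <;> norm_num [Matrix.mul_fin_two]
    have e2 : !![(1:ℂ), -1; 1, -1] * !![(1:ℂ), -1; 1, -1] = 0 := by
      ext i j; fin_cases i <;> fin_cases j <;> norm_num [Matrix.mul_fin_two]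
    have e3 : !![(1:ℂ), 1; -1, -1] * !![(1:ℂ), -1; 1, -1] = !![(2:ℂ), -2; -2, 2] := by
      norm_num [Matrix.mul_fin_two]
    have e4 : !![(1:ℂ), -1; 1, -1] * !![(1:ℂ), 1; -1, -1] = !![(2:ℂ), 2; 2, 2] := by
      norm_num [Matrix.mul_fin_two]
    have e5 : !![(2:ℂ), 2; 2, 2] + !![(2:ℂ), -2; -2, 2] = (4:ℂ) • 1 := by
      ext i j; fin_cases i <;> fin_cases j <;> norm_num [Matrix.one_apply]
    rw [hW, Matrix.smul_mul, Matrix.mul_smul, smul_smul]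
    simp only [Matrix.mul_add, Matrix.add_mul, ← Matrix.mul_kronecker_mul, hU1, hU2,
      e1, e2, Matrix.zero_kronecker, add_zero, zero_add, e3, e4]
    rw [← Matrix.add_kronecker, e5, Matrix.smul_kronecker, smul_smul,
      Matrix.one_kronecker_one]
    norm_num
  refine ⟨part1, ?_, ?_⟩
  · rw [hWW]
    ext s t
    simp [Matrix.one_apply, Prod.ext_iff]
  · ext s t
    have he : U s t + star U s t = 2 * A s t := by
      have := congrArg (fun X : Matrix ι ι ℂ => X s t) hsum
      simpa using this
    simp only [Matrix.submatrix_apply, hW, Matrix.smul_apply, Matrix.add_apply,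
      Matrix.kroneckerMap_apply, smul_eq_mul]
    norm_num
    simp only [Matrix.star_apply, starRingEnd_apply] at he ⊢
    linear_combination (2:ℂ)⁻¹ * he
end

section
/- Let $\hat H = \sum_{j=0}^{M-1} \beta_j \hat H_j$ with each $\hat H_j$ Hermitian on $\mathcal{H}_s$, $\|\hat H_j\| \leq 1$, and $\beta_j > 0$ real. Suppose $U_j$ are unitaries on $\mathcal{H}_a \otimes \mathcal{H}_s$ and $S_a$ is a unitary on $\mathcal{H}_a$ such that for every $j$: $(\langle 0|_a \otimes I_s)(S_a \otimes I_s)U_j(|0\rangle_a \otimes I_s) = \hat H_j$ and $(\langle 0|_a \otimes I_s)\big[(S_a \otimes I_s)U_j\big]^2(|0\rangle_a \otimes I_s) = I_s$. Let $\mathrm{PREP}$ be a unitary on $\mathbb{C}^M$ with $\mathrm{PREP}|0\rangle = \frac{1}{\sqrt{\|\beta\|_1}}\sum_{j} \sqrt{\beta_j}|j\rangle$, where $\|\beta\|_1 = \sum_j \beta_j$, and let $U_{\hat H} = (\mathrm{PREP}^\dagger \otimes I_{as})\big(\sum_j |j\rangle\langle j| \otimes U_j\big)(\mathrm{PREP}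 \otimes I_{as})$. Then, with $S' = I_{a_\Lambda} \otimes S_a \otimes I_s$: (i) $(\langle 0|_{a_\Lambda} \otimes \langle 0|_a \otimes I_s)\, S' U_{\hat H}\, (|0\rangle_{a_\Lambda} \otimes |0\rangle_a \otimes I_s) = \hat H / \|\beta\|_1$, and (ii) $(\langle 0|_{a_\Lambda} \otimes \langle 0|_a \otimes I_s)\, (S' U_{\hat H})^2\, (|0\rangle_{a_\Lambda} \otimes |0\rangle_a \otimes I_s) = I_s$. -/
open Matrix Kronecker
open scoped Matrix.Norms.L2Operator

/-- Lemma 3 of the paper: if the block encodings `U_j` of local Hamiltonian terms `Ĥ_j`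
share a common qubitization operator `S_a` on the common ancilla register, then the LCU
combination `U_Ĥ = (PREP† ⊗ I) SEL (PREP ⊗ I)` is qubitized by
`S' = I_{a_Λ} ⊗ S_a ⊗ I_s`: the `(|0⟩,|0⟩)`-block of `S' U_Ĥ` is `Ĥ/‖β‖₁` and the
`(|0⟩,|0⟩)`-block of `(S' U_Ĥ)²` is the identity. -/
theorem lcu_walk_operator {ι κ : Type*} [Fintype ι] [DecidableEq ι]
    [Fintype κ] [DecidableEq κ] (a0 : κ) (M : ℕ) (hM : 0 < M)
    (Hloc : Fin M → Matrix ι ι ℂ) (hHerm : ∀ j, (Hloc j).IsHermitian)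
    (hHnorm : ∀ j, ‖Hloc j‖ ≤ 1)
    (β : Fin M → ℝ) (hβ : ∀ j, 0 < β j)
    (Uj : Fin M → Matrix (κ × ι) (κ × ι) ℂ)
    (hUj : ∀ j, Uj j ∈ Matrix.unitaryGroup (κ × ι) ℂ)
    (S : Matrix κ κ ℂ) (hS : S ∈ Matrix.unitaryGroup κ ℂ)
    (hblock1 : ∀ j, ((S ⊗ₖ (1 : Matrix ι ι ℂ)) * Uj j).submatrix
        (fun s : ι => (a0, s)) (fun s : ι => (a0, s)) = Hloc j)
    (hblock2 : ∀ j, (((S ⊗ₖ (1 : Matrix ι ι ℂ)) * Uj j) *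
        ((S ⊗ₖ (1 : Matrix ι ι ℂ)) * Uj j)).submatrix
        (fun s : ι => (a0, s)) (fun s : ι => (a0, s)) = 1)
    (PREP : Matrix (Fin M) (Fin M) ℂ) (hPREP : PREP ∈ Matrix.unitaryGroup (Fin M) ℂ)
    (hcol : ∀ j, PREP j ⟨0, hM⟩ =
      ((Real.sqrt (β j) / Real.sqrt (∑ k, β k) : ℝ) : ℂ))
    (SEL : Matrix (Fin M × κ × ι) (Fin M × κ × ι) ℂ)
    (hSEL : ∀ j a s j' a' s', SEL (j, a, s) (j', a', s') =
      if j = j' then Uj j (a, s) (a', s') else 0)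
    (UH : Matrix (Fin M × κ × ι) (Fin M × κ × ι) ℂ)
    (hUH : UH = (PREPᴴ ⊗ₖ (1 : Matrix (κ × ι) (κ × ι) ℂ)) * SEL *
        (PREP ⊗ₖ (1 : Matrix (κ × ι) (κ × ι) ℂ)))
    (S' : Matrix (Fin M × κ × ι) (Fin M × κ × ι) ℂ)
    (hS' : S' = (1 : Matrix (Fin M) (Fin M) ℂ) ⊗ₖ (S ⊗ₖ (1 : Matrix ι ι ℂ))) :
    ((S' * UH).submatrix (fun s : ι => ((⟨0, hM⟩ : Fin M), a0, s))
        (fun s : ι => ((⟨0, hM⟩ : Fin M), a0, s)) =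
      (((∑ k, β k : ℝ) : ℂ))⁻¹ • ∑ j, (β j : ℂ) • Hloc j) ∧
    (((S' * UH) * (S' * UH)).submatrix (fun s : ι => ((⟨0, hM⟩ : Fin M), a0, s))
        (fun s : ι => ((⟨0, hM⟩ : Fin M), a0, s)) = 1) := by
  haveI : Nonempty (Fin M) := Fin.pos_iff_nonempty.mp hM
  set X : Matrix (κ × ι) (κ × ι) ℂ := S ⊗ₖ (1 : Matrix ι ι ℂ) with hX
  set z : Fin M := ⟨0, hM⟩ with hz
  have hSum : (0 : ℝ) < ∑ k, β k := Finset.sum_pos (fun k _ => hβ k) Finset.univ_nonempty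
  -- coefficient computation
  have hcoef : ∀ k, (starRingEnd ℂ) (PREP k z) * PREP k z = ((β k / ∑ k, β k : ℝ) : ℂ) := by
    intro k
    rw [hcol, Complex.conj_ofReal, ← Complex.ofReal_mul]
    congr 1
    rw [div_mul_div_comm, Real.mul_self_sqrt (hβ k).le, Real.mul_self_sqrt hSum.le]
  -- generalized entry lemma
  have hentry : ∀ (V : Fin M → Matrix (κ × ι) (κ × ι) ℂ)
      (D : Matrix (Fin M × κ × ι) (Fin M × κ × ι) ℂ),
      (∀ p q : Fin M × κ × ι, D p q = if p.1 = q.1 then V p.1 p.2 q.2 else 0) →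
      ∀ j v j' v', ((PREPᴴ ⊗ₖ X) * D * (PREP ⊗ₖ (1 : Matrix (κ × ι) (κ × ι) ℂ)))
          (j, v) (j', v') =
        ∑ k, (starRingEnd ℂ) (PREP k j) * PREP k j' * ((X * V k) v v') := by
    intro V D hD j v j' v'
    simp only [Matrix.mul_apply, Fintype.sum_prod_type, Matrix.kroneckerMap_apply, hX,
      hD, Matrix.one_apply, Matrix.conjTranspose_apply, mul_ite, mul_zero, ite_mul, zero_mul,
      Finset.sum_ite_eq', Finset.mem_univ, if_true, mul_one,
      Finset.sum_ite_irrel, Finset.sum_const_zero]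
    refine Finset.sum_congr rfl fun k _ => ?_
    rw [Finset.mul_sum, Finset.sum_mul]
    refine Finset.sum_congr rfl fun a _ => ?_
    rw [Finset.mul_sum, Finset.sum_mul]
    refine Finset.sum_congr rfl fun s _ => ?_
    by_cases h : v.2 = s <;> simp [h] <;> ring
  have hSEL' : ∀ p q : Fin M × κ × ι, SEL p q =
      if p.1 = q.1 then Uj p.1 p.2 q.2 else 0 := by
    rintro ⟨j, a, s⟩ ⟨j', a', s'⟩; exact hSEL j a s j' a' s'
  -- S' * UH = (PREPᴴ ⊗ X) * SEL * (PREP ⊗ 1)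
  have hSU : S' * UH = (PREPᴴ ⊗ₖ X) * SEL * (PREP ⊗ₖ (1 : Matrix (κ × ι) (κ × ι) ℂ)) := by
    rw [hS', hUH, ← mul_assoc, ← mul_assoc, ← Matrix.mul_kronecker_mul,
      Matrix.one_mul, Matrix.mul_one]
  have hb1 : ∀ k (s s' : ι), (X * Uj k) (a0, s) (a0, s') =
      Hloc k s s' := fun k s s' => congrFun (congrFun (hblock1 k) s) s'
  have hb2 : ∀ k (s s' : ι), ((X * Uj k) * (X * Uj k)) (a0, s) (a0, s') =
      (1 : Matrix ι ι ℂ) s s' := fun k s s' => congrFun (congrFun (hblock2 k) s) s'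
  constructor
  · ext s s'
    simp only [Matrix.submatrix_apply]
    rw [hSU, hentry Uj SEL hSEL' z (a0, s) z (a0, s')]
    simp only [Matrix.smul_apply, Matrix.sum_apply, smul_eq_mul]
    rw [Finset.mul_sum]
    refine Finset.sum_congr rfl fun k _ => ?_
    rw [hcoef k, hb1 k s s']
    push_cast
    ring
  · -- square
    have hPP : PREP * PREPᴴ = 1 := by
      have := hPREP.2
      rwa [Matrix.star_eq_conjTranspose] at this
    have key : (PREP ⊗ₖ (1 : Matrix (κ × ι) (κ × ι) ℂ)) * (PREPᴴ ⊗ₖ X) =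
        (1 : Matrix (Fin M) (Fin M) ℂ) ⊗ₖ X := by
      rw [← Matrix.mul_kronecker_mul, hPP, Matrix.one_mul]
    have hD : ∀ p q : Fin M × κ × ι,
        (SEL * ((1 : Matrix (Fin M) (Fin M) ℂ) ⊗ₖ X) * SEL) p q =
        if p.1 = q.1 then (Uj p.1 * X * Uj p.1) p.2 q.2 else 0 := by
      rintro ⟨k, v⟩ ⟨l, v'⟩
      simp only [Matrix.mul_apply, Fintype.sum_prod_type, Matrix.kroneckerMap_apply,
        hSEL', Matrix.one_apply, mul_ite, mul_zero, ite_mul, zero_mul,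
        Finset.sum_ite_eq', Finset.sum_ite_eq, Finset.mem_univ, if_true, mul_one,
        Finset.sum_ite_irrel, Finset.sum_const_zero]
      rcases eq_or_ne k l with h | h <;> simp [h]
    have hBB : (S' * UH) * (S' * UH) =
        (PREPᴴ ⊗ₖ X) * (SEL * ((1 : Matrix (Fin M) (Fin M) ℂ) ⊗ₖ X) * SEL) *
          (PREP ⊗ₖ (1 : Matrix (κ × ι) (κ × ι) ℂ)) := by
      rw [hSU]
      simp only [mul_assoc]
      rw [← mul_assoc (PREP ⊗ₖ (1 : Matrix (κ × ι) (κ × ι) ℂ)) (PREPᴴ ⊗ₖ X), key]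
    ext s s'
    simp only [Matrix.submatrix_apply, Matrix.one_apply]
    rw [hBB, hentry (fun k => Uj k * X * Uj k) _ hD z (a0, s) z (a0, s')]
    have hXU : ∀ k : Fin M, X * (Uj k * X * Uj k) = (X * Uj k) * (X * Uj k) := by
      intro k; noncomm_ring
    calc ∑ k, (starRingEnd ℂ) (PREP k z) * PREP k z * ((X * (Uj k * X * Uj k)) (a0, s) (a0, s'))
        = ∑ k, ((β k / ∑ k, β k : ℝ) : ℂ) * (1 : Matrix ι ι ℂ) s s' := by
          refine Finset.sum_congr rfl fun k _ => ?_
          rw [hcoef k, hXU k, hb2 k s s']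
      _ = (if s = s' then 1 else 0) := by
          rw [← Finset.sum_mul]
          have : ∑ k, ((β k / ∑ k, β k : ℝ) : ℂ) = 1 := by
            rw [← Complex.ofReal_sum]
            norm_cast
            rw [← Finset.sum_div, div_self hSum.ne']
          rw [this, one_mul, Matrix.one_apply]
end
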